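/- Let H be a finitely generated abelian group with basis {(eᵢ, nᵢ) : i ∈ I}, let S be an affine space over H^{(2)} = Hom(H, ℤ/2ℤ) with base point σ₀, define ēᵢ : S → ℤ/2ℤ by ēᵢ(σ₀ + y) = y(eᵢ), and let P be the subgroup of H × A(S, ℤ/2ℤ) consisting of pairs (x, f) with f(σ + y) = f(σ) + y(x) for all σ ∈ S, y ∈ H^{(2)}. Then {((0, 1̄), 2)} ∪ {((eᵢ, ēᵢ), nᵢ) : i ∈ I} is a basis of P: the element (0, 1̄) has order 2, each (eᵢ, ēᵢ) has additive order nᵢ, and P is the internal direct sum of the cyclic subgroups they generate. -/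

import Mathlib

/-- A family `{(eᵢ, nᵢ)}` is a (cyclic) basis of the abelian group `A` if each `eᵢ` has
additive order `nᵢ` (`nᵢ = 0` meaning infinite order) and `A` is the internal direct sum of
the cyclic subgroups generated by the `eᵢ`. -/
def IsCyclicBasis {A : Type*} [AddCommGroup A] {I : Type*} [Fintype I] [DecidableEq I]
    (e : I → A) (n : I → ℕ) : Prop :=
  (∀ i, addOrderOf (e i) = n i) ∧
    DirectSum.IsInternal (fun i => AddSubgroup.zmultiples (e i))

section Affine

variable (H : Type*) [AddCommGroup H] (S : Type*) [AddTorsor (H →+ ZMod 2) S]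

/-- The group `P`: the subgroup of `H × Map(S, ℤ/2ℤ)` of pairs `(x, f)` such that
`f(σ + y) = f(σ) + y(x)` for all `σ ∈ S` and `y ∈ Hom(H, ℤ/2ℤ)` (such an `f` is
automatically an affine function). -/
def Pgrp : AddSubgroup (H × (S → ZMod 2)) where
  carrier := {p | ∀ (σ : S) (y : H →+ ZMod 2), p.2 (y +ᵥ σ) = p.2 σ + y p.1}
  add_mem' := by
    intro p q hp hq σ y
    simp only [Prod.snd_add, Pi.add_apply, Prod.fst_add, map_add, hp σ y, hq σ y]
    abel
  zero_mem' := by intro σ y; simp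
  neg_mem' := by
    intro p hp σ y
    simp only [Prod.snd_neg, Pi.neg_apply, Prod.fst_neg, map_neg, hp σ y]
    abel

/-- The distinguished element `(0, 1̄)` of `P`. -/
def pOne : Pgrp H S :=
  ⟨(0, fun _ => 1), fun σ y => by simp⟩

/-- The element `(x, x̄)` of `P`, where `x̄ : S → ℤ/2ℤ` is the affine function determined by
the base point `σ₀` via `x̄(σ₀ + y) = y(x)`. -/
def pGen (σ₀ : S) (x : H) : Pgrp H S :=
  ⟨(x, fun σ => (σ -ᵥ σ₀) x), fun σ y => by
    simp only [vadd_vsub_assoc, AddMonoidHom.add_apply]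
    exact add_comm _ _⟩

end Affine

section ProofAux

variable {H : Type*} [AddCommGroup H] {S : Type*} [AddTorsor (H →+ ZMod 2) S]

/-- The first projection `P →+ H`. -/
def pFst : Pgrp H S →+ H :=
  (AddMonoidHom.fst H (S → ZMod 2)).comp (Pgrp H S).subtype

/-- Evaluation of the function component at a point. -/
def pEval (σ₀ : S) : Pgrp H S →+ ZMod 2 :=
  ((Pi.evalAddMonoidHom (fun _ : S => ZMod 2) σ₀).comp
      (AddMonoidHom.snd H (S → ZMod 2))).comp (Pgrp H S).subtype

@[simp] lemma pFst_apply (p : Pgrp H S) : pFst p = (p : H × (S → ZMod 2)).1 := rfl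

@[simp] lemma pEval_apply (σ₀ : S) (p : Pgrp H S) :
    pEval σ₀ p = (p : H × (S → ZMod 2)).2 σ₀ := rfl

/-- `pGen` as an additive monoid hom. -/
def pGenHom (σ₀ : S) : H →+ Pgrp H S where
  toFun := pGen H S σ₀
  map_zero' := by
    apply Subtype.ext
    refine Prod.ext rfl (funext fun σ => ?_)
    simp [pGen]
  map_add' x y := by
    apply Subtype.ext
    refine Prod.ext rfl (funext fun σ => ?_)
    simp [pGen]

@[simp] lemma pGenHom_apply (σ₀ : S) (x : H) : pGenHom σ₀ x = pGen H S σ₀ x := rfl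

lemma pFst_pGen (σ₀ : S) (x : H) : pFst (pGen H S σ₀ x) = x := rfl

lemma pEval_pGen (σ₀ : S) (x : H) : pEval σ₀ (pGen H S σ₀ x) = 0 := by
  show (σ₀ -ᵥ σ₀ : H →+ ZMod 2) x = 0
  rw [vsub_self]
  rfl

lemma pGenHom_injective (σ₀ : S) : Function.Injective (pGenHom σ₀) := by
  intro x y h
  have := congrArg (fun p => pFst p) h
  exact this

lemma pOne_snd_eq (σ : S) : ((pOne H S : Pgrp H S) : H × (S → ZMod 2)).2 σ = 1 := rfl

lemma snd_eq (σ₀ : S) (p : Pgrp H S) (σ : S) :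
    (p : H × (S → ZMod 2)).2 σ = pEval σ₀ p + (σ -ᵥ σ₀) (pFst p) := by
  have h := p.2 σ₀ (σ -ᵥ σ₀)
  rw [vsub_vadd] at h
  simpa using h

lemma zsmul_pOne_val (k : ℤ) :
    ((k • pOne H S : Pgrp H S) : H × (S → ZMod 2)) = (0, fun _ => (k : ZMod 2)) := by
  refine Prod.ext ?_ (funext fun σ => ?_)
  · simp [pOne]
  · show k • ((pOne H S : Pgrp H S) : H × (S → ZMod 2)).2 σ = _
    rw [pOne_snd_eq]
    simp [zsmul_eq_mul]

end ProofAux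

section ProofAux2

variable {H : Type*} [AddCommGroup H] {S : Type*} [AddTorsor (H →+ ZMod 2) S]

lemma pE_injective (σ₀ : S) :
    Function.Injective ((pEval (H := H) σ₀).prod pFst) := by
  intro p q h
  rw [Prod.ext_iff] at h
  obtain ⟨h1, h2⟩ := h
  apply Subtype.ext
  refine Prod.ext ?_ (funext fun σ => ?_)
  · simpa using h2
  · rw [snd_eq σ₀ p σ, snd_eq σ₀ q σ]
    simp only [AddMonoidHom.prod_apply] at h1 h2
    rw [h1, h2]

lemma pE_surjective (σ₀ : S) :
    Function.Surjective ((pEval (H := H) σ₀).prod pFst) := by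
  rintro ⟨c, x⟩
  refine ⟨pGenHom σ₀ x + (c.val : ℤ) • pOne H S, ?_⟩
  rw [map_add, map_zsmul]
  have h1 : ((pEval (H := H) σ₀).prod pFst) (pGenHom σ₀ x) = (0, x) := by
    refine Prod.ext ?_ ?_
    · simpa using pEval_pGen σ₀ x
    · simpa using pFst_pGen σ₀ x
  have h2 : ((pEval (H := H) σ₀).prod pFst) (pOne H S) = (1, 0) := rfl
  rw [h1, h2]
  refine Prod.ext ?_ ?_
  · show 0 + (c.val : ℤ) • (1 : ZMod 2) = c
    rw [zero_add, zsmul_eq_mul, mul_one]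
    push_cast
    exact ZMod.natCast_rightInverse c
  · show x + (c.val : ℤ) • (0 : H) = x
    simp

/-- The restriction of the first projection to `zmultiples (pGen σ₀ x)`. -/
def zmulHom (σ₀ : S) (x : H) :
    AddSubgroup.zmultiples (pGen H S σ₀ x) →+ AddSubgroup.zmultiples x :=
  AddMonoidHom.codRestrict
    ((pFst (H := H) (S := S)).comp (AddSubgroup.zmultiples (pGen H S σ₀ x)).subtype) _
    (by
      rintro ⟨p, hp⟩
      obtain ⟨k, hk⟩ := AddSubgroup.mem_zmultiples_iff.mp hp
      refine AddSubgroup.mem_zmultiples_iff.mpr ⟨k, ?_⟩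
      show k • x = pFst p
      rw [← hk, map_zsmul, pFst_pGen])

lemma zmulHom_bijective (σ₀ : S) (x : H) : Function.Bijective (zmulHom σ₀ x) := by
  constructor
  · rintro ⟨p, hp⟩ ⟨q, hq⟩ h
    obtain ⟨k, hk⟩ := AddSubgroup.mem_zmultiples_iff.mp hp
    obtain ⟨l, hl⟩ := AddSubgroup.mem_zmultiples_iff.mp hq
    have h' : pFst p = pFst q := congrArg Subtype.val h
    subst hk; subst hl
    simp only [map_zsmul, pFst_pGen] at h'
    apply Subtype.ext
    show k • pGen H S σ₀ x = l • pGen H S σ₀ x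
    calc k • pGen H S σ₀ x = pGenHom σ₀ (k • x) := by rw [map_zsmul, pGenHom_apply]
    _ = pGenHom σ₀ (l • x) := by rw [h']
    _ = l • pGen H S σ₀ x := by rw [map_zsmul, pGenHom_apply]
  · rintro ⟨h, hh⟩
    obtain ⟨k, hk⟩ := AddSubgroup.mem_zmultiples_iff.mp hh
    refine ⟨⟨k • pGen H S σ₀ x, AddSubgroup.mem_zmultiples_iff.mpr ⟨k, rfl⟩⟩, ?_⟩
    apply Subtype.ext
    show pFst (k • pGen H S σ₀ x) = h
    rw [map_zsmul, pFst_pGen, hk]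

/-- `zmulHom` as an additive equivalence. -/
noncomputable def zmulEquiv (σ₀ : S) (x : H) :
    AddSubgroup.zmultiples (pGen H S σ₀ x) ≃+ AddSubgroup.zmultiples x :=
  AddEquiv.ofBijective (zmulHom σ₀ x) (zmulHom_bijective σ₀ x)

lemma zmulEquiv_apply (σ₀ : S) (x : H) (p : AddSubgroup.zmultiples (pGen H S σ₀ x)) :
    (zmulEquiv σ₀ x p : H) = pFst (p : Pgrp H S) := rfl

/-- The evaluation equivalence on `zmultiples pOne`. -/
noncomputable def pOneEquiv (σ₀ : S) :
    AddSubgroup.zmultiples (pOne H S) ≃+ ZMod 2 := by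
  refine AddEquiv.ofBijective
    ((pEval (H := H) σ₀).comp (AddSubgroup.zmultiples (pOne H S)).subtype) ⟨?_, ?_⟩
  · rintro ⟨p, hp⟩ ⟨q, hq⟩ h
    obtain ⟨k, hk⟩ := AddSubgroup.mem_zmultiples_iff.mp hp
    obtain ⟨l, hl⟩ := AddSubgroup.mem_zmultiples_iff.mp hq
    have h' : pEval σ₀ p = pEval σ₀ q := h
    subst hk; subst hl
    simp only [pEval_apply, zsmul_pOne_val] at h'
    apply Subtype.ext
    apply Subtype.ext
    rw [zsmul_pOne_val, zsmul_pOne_val, h']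
  · intro c
    refine ⟨⟨(c.val : ℤ) • pOne H S, AddSubgroup.mem_zmultiples_iff.mpr ⟨_, rfl⟩⟩, ?_⟩
    show pEval σ₀ ((c.val : ℤ) • pOne H S) = c
    rw [pEval_apply, zsmul_pOne_val]
    push_cast
    exact ZMod.natCast_rightInverse c

lemma pOneEquiv_apply (σ₀ : S) (p : AddSubgroup.zmultiples (pOne H S)) :
    pOneEquiv σ₀ p = pEval σ₀ (p : Pgrp H S) := rfl

end ProofAux2

set_option maxHeartbeats 1000000

/-- Let `H` be a finitely generated abelian group with basis
`{(eᵢ, nᵢ) : i ∈ I}`, `S` an affine space over `H⁽²⁾ = Hom(H, ℤ/2ℤ)` with base point `σ₀`,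
`ēᵢ(σ₀ + y) = y(eᵢ)`, and `P` the subgroup of pairs `(x, f)` with `f(σ+y) = f(σ) + y(x)`.
Then `{((0, 1̄), 2)} ∪ {((eᵢ, ēᵢ), nᵢ) : i ∈ I}` is a basis of `P`. -/
theorem stmt15 (H : Type*) [AddCommGroup H] (I : Type*) [Fintype I] [DecidableEq I]
    (e : I → H) (n : I → ℕ) (hb : IsCyclicBasis e n)
    (S : Type*) [AddTorsor (H →+ ZMod 2) S] (σ₀ : S) :
    IsCyclicBasis
      (fun o : Option I => o.elim (pOne H S) (fun i => pGen H S σ₀ (e i)))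
      (fun o : Option I => o.elim 2 (fun i => n i)) := by
  obtain ⟨hord, hint⟩ := hb
  constructor
  · rintro (_ | i)
    · show addOrderOf (pOne H S) = 2
      refine addOrderOf_eq_prime ?_ ?_
      · have h2 : ((2 : ℤ) • pOne H S) = (2 : ℕ) • pOne H S := natCast_zsmul _ 2
        rw [← h2]
        apply Subtype.ext
        rw [zsmul_pOne_val]
        refine Prod.ext rfl (funext fun σ => ?_)
        show ((2 : ℤ) : ZMod 2) = 0
        decide
      · intro h
        have := congrArg (fun p : Pgrp H S => (p : H × (S → ZMod 2)).2 σ₀) h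
        simp only [pOne_snd_eq] at this
        exact one_ne_zero this
    · show addOrderOf (pGen H S σ₀ (e i)) = n i
      rw [← hord i]
      exact addOrderOf_injective (pGenHom σ₀) (pGenHom_injective σ₀) (e i)
  · set A : Option I → AddSubgroup (Pgrp H S) :=
      fun o => AddSubgroup.zmultiples (o.elim (pOne H S) (fun i => pGen H S σ₀ (e i))) with hA
    show Function.Bijective (DirectSum.coeAddMonoidHom A)
    let E : Pgrp H S →+ ZMod 2 × H := (pEval (H := H) σ₀).prod pFst
    let T : (DirectSum (Option I) fun o => A o) ≃+ ZMod 2 × H :=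
      (DirectSum.addEquivProdDirectSum (α := fun o => ↥(A o))).trans
        (AddEquiv.prodCongr (pOneEquiv σ₀)
          ((DFinsupp.mapRange.addEquiv fun i => zmulEquiv σ₀ (e i)).trans
            (AddEquiv.ofBijective
              (DirectSum.coeAddMonoidHom fun i => AddSubgroup.zmultiples (e i)) hint)))
    have key : E.comp (DirectSum.coeAddMonoidHom A) = T.toAddMonoidHom := by
      refine DirectSum.addHom_ext fun o x => ?_
      match o, x with
      | none, x =>
        obtain ⟨k, hk⟩ := AddSubgroup.mem_zmultiples_iff.mp x.2
        have h1 : DirectSum.addEquivProdDirectSum (α := fun o => ↥(A o)) (DirectSum.of (fun o => ↥(A o)) none x) = ((x, 0) : ↥(A none) × DirectSum I fun i => ↥(A (some i))) := by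
          rw [DirectSum.addEquivProdDirectSum_apply]
          refine Prod.ext ?_ ?_
          · show (DirectSum.of (fun o => ↥(A o)) none x) none = x
            exact DirectSum.of_eq_same (β := fun o => ↥(A o)) none x
          · show DFinsupp.comapDomain some (Option.some_injective I)
              (DirectSum.of (fun o => ↥(A o)) none x) = 0
            refine DFinsupp.ext fun j => ?_
            rw [DFinsupp.comapDomain_apply, DFinsupp.zero_apply]
            exact DirectSum.of_eq_of_ne (β := fun o => ↥(A o)) none (some j) x (by simp)
        have lhs : E.comp (DirectSum.coeAddMonoidHom A) (DirectSum.of (fun o => ↥(A o)) none x)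
            = (pEval σ₀ (x : Pgrp H S), pFst (x : Pgrp H S)) := by
          simp only [AddMonoidHom.comp_apply, DirectSum.coeAddMonoidHom_of]
          rfl
        have hfst : pFst (x : Pgrp H S) = 0 := by
          rw [← hk, map_zsmul]
          show k • pFst (pOne H S) = 0
          rw [show pFst (pOne H S) = 0 from rfl, smul_zero]
        rw [lhs, hfst]
        show _ = (AddEquiv.prodCongr (pOneEquiv σ₀) _)
          (DirectSum.addEquivProdDirectSum (α := fun o => ↥(A o)) (DirectSum.of (fun o => ↥(A o)) none x))
        rw [h1]
        refine Prod.ext rfl ?_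
        show (0 : H) = ((DFinsupp.mapRange.addEquiv fun i => zmulEquiv σ₀ (e i)).trans
          (AddEquiv.ofBijective
            (DirectSum.coeAddMonoidHom fun i => AddSubgroup.zmultiples (e i)) hint)) 0
        rw [map_zero]
      | some i, x =>
        obtain ⟨k, hk⟩ := AddSubgroup.mem_zmultiples_iff.mp x.2
        have h1 : DirectSum.addEquivProdDirectSum (α := fun o => ↥(A o)) (DirectSum.of (fun o => ↥(A o)) (some i) x)
            = ((0, DirectSum.of (fun i => ↥(A (some i))) i x) : ↥(A none) × DirectSum I fun i => ↥(A (some i))) := by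
          rw [DirectSum.addEquivProdDirectSum_apply]
          refine Prod.ext ?_ ?_
          · show (DirectSum.of (fun o => ↥(A o)) (some i) x) none = 0
            exact DirectSum.of_eq_of_ne (β := fun o => ↥(A o)) (some i) none x (by simp)
          · show DFinsupp.comapDomain some (Option.some_injective I)
              (DirectSum.of (fun o => ↥(A o)) (some i) x) = _
            exact DFinsupp.comapDomain_single (β := fun o => ↥(A o)) some
              (Option.some_injective I) i x
        have lhs : E.comp (DirectSum.coeAddMonoidHom A) (DirectSum.of (fun o => ↥(A o)) (some i) x)
            = (pEval σ₀ (x : Pgrp H S), pFst (x : Pgrp H S)) := by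
          simp only [AddMonoidHom.comp_apply, DirectSum.coeAddMonoidHom_of]
          rfl
        have hk' : k • pGen H S σ₀ (e i) = (x : Pgrp H S) := hk
        have hev : pEval σ₀ (x : Pgrp H S) = 0 := by
          rw [← hk', map_zsmul, pEval_pGen, smul_zero]
        rw [lhs, hev]
        show _ = (AddEquiv.prodCongr (pOneEquiv σ₀) _)
          (DirectSum.addEquivProdDirectSum (α := fun o => ↥(A o)) (DirectSum.of (fun o => ↥(A o)) (some i) x))
        rw [h1]
        refine Prod.ext (map_zero (pOneEquiv σ₀)).symm ?_
        show pFst (x : Pgrp H S) = ((DFinsupp.mapRange.addEquiv fun i => zmulEquiv σ₀ (e i)).trans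
          (AddEquiv.ofBijective
            (DirectSum.coeAddMonoidHom fun i => AddSubgroup.zmultiples (e i)) hint))
          (DirectSum.of (fun j => ↥(A (some j))) i x)
        erw [AddEquiv.trans_apply, DFinsupp.mapRange.addEquiv_apply]
        erw [show (DirectSum.of (fun j => ↥(A (some j))) i x)
            = DFinsupp.single i x from rfl, DFinsupp.mapRange_single]
        erw [show (DFinsupp.single i ((zmulEquiv σ₀ (e i)) x))
            = DirectSum.of (fun j => ↥(AddSubgroup.zmultiples (e j))) i ((zmulEquiv σ₀ (e i)) x)
            from rfl]
        erw [AddEquiv.ofBijective_apply]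
        exact ((DirectSum.coeAddMonoidHom_of (fun j => AddSubgroup.zmultiples (e j)) i
          ((zmulEquiv σ₀ (e i)) x)).trans (zmulEquiv_apply σ₀ (e i) x)).symm
    have hE : Function.Bijective E := ⟨pE_injective σ₀, pE_surjective σ₀⟩
    have hcomp : Function.Bijective (⇑E ∘ ⇑(DirectSum.coeAddMonoidHom A)) := by
      have h : ⇑E ∘ ⇑(DirectSum.coeAddMonoidHom A) = ⇑T :=
        funext fun z => DFunLike.congr_fun key z
      rw [h]; exact T.bijective
    exact (Function.Bijective.of_comp_iff' hE ⇑(DirectSum.coeAddMonoidHom A)).mp hcomp
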